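/- Let X be a pointed metric space. On the space Lip₀(X), regarded as the dual of the Banach space F(X), the bounded weak* topology τ_bw* (the largest topology on Lip₀(X) agreeing with the weak* topology σ(Lip₀(X), F(X)) on norm-bounded sets) coincides with the topology τ_γ. -/

import Mathlib

open Filter Topology Set Pointwise

set_option linter.unusedSectionVars false
set_option linter.unusedVariables false

noncomputable section

namespace LipApprox

variable (X : Type*) [MetricSpace X] (x₀ : X)
variable (F : Type*) [NormedAddCommGroup F] [NormedSpace ℝ F]

/-- The Lipschitz maps `X → F` vanishing at the base point, as a submodule of `X → F`. -/
def lip0Submodule : Submodule ℝ (X → F) where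
  carrier := {f | (∃ K, LipschitzWith K f) ∧ f x₀ = 0}
  add_mem' := by
    rintro f g ⟨⟨Kf, hf⟩, hf0⟩ ⟨⟨Kg, hg⟩, hg0⟩
    exact ⟨⟨Kf + Kg, hf.add hg⟩, by simp [hf0, hg0]⟩
  zero_mem' := ⟨⟨0, LipschitzWith.const 0⟩, rfl⟩
  smul_mem' := by
    rintro c f ⟨⟨K, hf⟩, hf0⟩
    exact ⟨⟨‖c‖₊ * K, (lipschitzWith_smul c).comp hf⟩, by simp [hf0]⟩

/-- The space `Lip₀(X, F)` of Lipschitz maps from `X` to `F` vanishing at the base point. -/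
def lip0 : Type _ := ↥(lip0Submodule X x₀ F)

instance : AddCommGroup (lip0 X x₀ F) :=
  inferInstanceAs (AddCommGroup ↥(lip0Submodule X x₀ F))

instance : Module ℝ (lip0 X x₀ F) :=
  inferInstanceAs (Module ℝ ↥(lip0Submodule X x₀ F))

variable {X x₀ F}

/-- The underlying function of an element of `Lip₀(X, F)`. -/
def toFun' (f : lip0 X x₀ F) : X → F := f.1

lemma exists_lip (f : lip0 X x₀ F) : ∃ K, LipschitzWith K (toFun' f) := f.2.1

lemma apply_base (f : lip0 X x₀ F) : toFun' f x₀ = 0 := f.2.2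

lemma toFun'_add (f g : lip0 X x₀ F) : toFun' (f + g) = toFun' f + toFun' g := rfl
lemma toFun'_neg (f : lip0 X x₀ F) : toFun' (-f) = -toFun' f := rfl
lemma toFun'_smul (c : ℝ) (f : lip0 X x₀ F) : toFun' (c • f) = c • toFun' f := rfl
lemma toFun'_zero : toFun' (0 : lip0 X x₀ F) = 0 := rfl

variable (X x₀ F) in
/-- The Lipschitz norm of an element of `Lip₀(X, F)`. -/
def lipNorm (f : lip0 X x₀ F) : ℝ :=
  ⨆ p : X × X, ‖toFun' f p.1 - toFun' f p.2‖ / dist p.1 p.2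

lemma ratio_le (f : lip0 X x₀ F) {K : NNReal} (hK : LipschitzWith K (toFun' f))
    (p : X × X) : ‖toFun' f p.1 - toFun' f p.2‖ / dist p.1 p.2 ≤ K := by
  rcases eq_or_ne p.1 p.2 with h | h
  · simp [h]
  · rw [div_le_iff₀ (dist_pos.2 h), ← dist_eq_norm]
    exact hK.dist_le_mul p.1 p.2

lemma bddAbove_ratio (f : lip0 X x₀ F) :
    BddAbove (Set.range fun p : X × X =>
      ‖toFun' f p.1 - toFun' f p.2‖ / dist p.1 p.2) := by
  obtain ⟨K, hK⟩ := exists_lip f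
  exact ⟨K, by rintro r ⟨p, rfl⟩; exact ratio_le f hK p⟩

lemma nonempty_pairs (x₀ : X) : Nonempty (X × X) := ⟨(x₀, x₀)⟩

lemma ratio_le_lipNorm (f : lip0 X x₀ F) (p : X × X) :
    ‖toFun' f p.1 - toFun' f p.2‖ / dist p.1 p.2 ≤ lipNorm X x₀ F f :=
  le_ciSup (bddAbove_ratio f) p

lemma lipNorm_nonneg (f : lip0 X x₀ F) : 0 ≤ lipNorm X x₀ F f := by
  have := ratio_le_lipNorm (x₀ := x₀) f (x₀, x₀)
  simpa using this

lemma norm_sub_le_lipNorm (f : lip0 X x₀ F) (x y : X) :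
    ‖toFun' f x - toFun' f y‖ ≤ lipNorm X x₀ F f * dist x y := by
  rcases eq_or_ne x y with rfl | h
  · simp
  · have := ratio_le_lipNorm (x₀ := x₀) f (x, y)
    rw [div_le_iff₀ (dist_pos.2 h)] at this
    simpa using this

instance : NormedAddCommGroup (lip0 X x₀ F) :=
  AddGroupNorm.toNormedAddCommGroup
    { toFun := lipNorm X x₀ F
      map_zero' := by
        haveI : Nonempty (X × X) := nonempty_pairs x₀
        have h0 : ∀ p : X × X,
            ‖toFun' (0 : lip0 X x₀ F) p.1 - toFun' (0 : lip0 X x₀ F) p.2‖ /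
              dist p.1 p.2 = 0 := by
          intro p; rw [toFun'_zero]; simp
        simp only [lipNorm, h0, ciSup_const]
      add_le' := by
        intro f g
        haveI : Nonempty (X × X) := nonempty_pairs x₀
        apply ciSup_le
        intro p
        rcases eq_or_ne p.1 p.2 with h | h
        · simp only [h, dist_self, div_zero]
          exact add_nonneg (lipNorm_nonneg f) (lipNorm_nonneg g)
        · have hnum : ‖toFun' (f + g) p.1 - toFun' (f + g) p.2‖ ≤
              ‖toFun' f p.1 - toFun' f p.2‖ + ‖toFun' g p.1 - toFun' g p.2‖ := by
            rw [toFun'_add, Pi.add_apply, Pi.add_apply, add_sub_add_comm]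
            exact norm_add_le _ _
          calc ‖toFun' (f + g) p.1 - toFun' (f + g) p.2‖ / dist p.1 p.2
              ≤ (‖toFun' f p.1 - toFun' f p.2‖ +
                  ‖toFun' g p.1 - toFun' g p.2‖) / dist p.1 p.2 := by gcongr
            _ = ‖toFun' f p.1 - toFun' f p.2‖ / dist p.1 p.2 +
                  ‖toFun' g p.1 - toFun' g p.2‖ / dist p.1 p.2 := add_div _ _ _
            _ ≤ lipNorm X x₀ F f + lipNorm X x₀ F g :=
                add_le_add (ratio_le_lipNorm f p) (ratio_le_lipNorm g p)
      neg' := by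
        intro f
        simp only [lipNorm]
        congr 1
        funext p
        congr 1
        rw [toFun'_neg, Pi.neg_apply, Pi.neg_apply, neg_sub_neg, norm_sub_rev]
      eq_zero_of_map_eq_zero' := by
        intro f hf
        have hzero : ∀ x : X, toFun' f x = 0 := by
          intro x
          rcases eq_or_ne x x₀ with h | h
          · rw [h]; exact apply_base f
          · have hf' : lipNorm X x₀ F f = 0 := hf
            have h1 := ratio_le_lipNorm (x₀ := x₀) f (x, x₀)
            rw [hf', div_le_iff₀ (dist_pos.2 h), zero_mul] at h1
            have h2 : toFun' f x - toFun' f x₀ = 0 := by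
              simpa using norm_le_zero_iff.1 h1
            have h3 := apply_base f
            rw [h3, sub_zero] at h2
            exact h2
        exact Subtype.ext (funext hzero) }

lemma lip0_norm_def (f : lip0 X x₀ F) : ‖f‖ = lipNorm X x₀ F f := rfl

instance : NormedSpace ℝ (lip0 X x₀ F) where
  norm_smul_le c f := by
    haveI : Nonempty (X × X) := nonempty_pairs x₀
    rw [lip0_norm_def, lip0_norm_def, lipNorm]
    apply ciSup_le
    intro p
    have h1 : toFun' (c • f) p.1 - toFun' (c • f) p.2 =
        c • (toFun' f p.1 - toFun' f p.2) := by
      rw [toFun'_smul, Pi.smul_apply, Pi.smul_apply, smul_sub]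
    rw [h1, norm_smul]
    rcases eq_or_ne p.1 p.2 with h | h
    · simp only [h, dist_self, div_zero]
      exact mul_nonneg (norm_nonneg c) (lipNorm_nonneg f)
    · rw [mul_div_assoc]
      exact mul_le_mul_of_nonneg_left (ratio_le_lipNorm (x₀ := x₀) f p) (norm_nonneg c)

variable (X x₀ F)

/-- Elements of `Lip₀(X, F)` as continuous maps. -/
def toCM (f : lip0 X x₀ F) : C(X, F) :=
  ⟨toFun' f, by
    obtain ⟨K, hK⟩ := exists_lip f
    exact hK.continuous⟩

/-- The compact-open topology `τ₀` on `Lip₀(X, F)`. -/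
def tau0 : TopologicalSpace (lip0 X x₀ F) :=
  TopologicalSpace.induced (toCM X x₀ F) ContinuousMap.compactOpen

/-- The set `γ(U) = ⋃ₙ (U₀ ∩ B + U₁ ∩ 2B + ⋯ + Uₙ ∩ 2ⁿB)` from the definition of the
mixed topology, where `B` is the closed unit ball of `Lip₀(X, F)`. -/
def gammaSet (U : ℕ → Set (lip0 X x₀ F)) : Set (lip0 X x₀ F) :=
  ⋃ n : ℕ, ∑ i ∈ Finset.range (n + 1), (U i ∩ {f | ‖f‖ ≤ 2 ^ i})

/-- The mixed topology `τ_γ = γ[Lip, τ₀]` on `Lip₀(X, F)`: the topology whose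
neighborhoods of a point `f` are generated by the translates by `f` of the sets `γ(U)`,
where `U` runs over all sequences of convex balanced `τ₀`-neighborhoods of zero. -/
def tauGamma : TopologicalSpace (lip0 X x₀ F) :=
  TopologicalSpace.mkOfNhds fun f =>
    ⨅ (U : ℕ → Set (lip0 X x₀ F))
      (_ : ∀ n, U n ∈ @nhds _ (tau0 X x₀ F) 0 ∧ Convex ℝ (U n) ∧ Balanced ℝ (U n)),
      Filter.principal ((f + ·) '' gammaSet X x₀ F U)

/-- A subset of `Lip₀(X, F)` is norm bounded if the Lipschitz norms of its members are
uniformly bounded. -/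
def NormBounded (B : Set (lip0 X x₀ F)) : Prop :=
  ∃ C : ℝ, ∀ f ∈ B, ‖f‖ ≤ C

/-- The locally convex topology `γτ_γ` on `Lip₀(X, F)`, generated by the seminorms
`f ↦ sup_n αₙ ‖f xₙ - f yₙ‖ / d(xₙ, yₙ)` where `(αₙ)` is a sequence of positive reals
tending to zero and `((xₙ, yₙ))` is a sequence of pairs of distinct points of `X`. -/
def gammaTauGamma : TopologicalSpace (lip0 X x₀ F) :=
  ⨅ (α : ℕ → ℝ) (z : ℕ → X × X)
    (_ : (∀ n, 0 < α n) ∧ Filter.Tendsto α Filter.atTop (nhds 0) ∧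
      ∀ n, (z n).1 ≠ (z n).2),
    TopologicalSpace.induced
      (fun f => UniformFun.ofFun fun n =>
        (α n / dist (z n).1 (z n).2) • (toFun' f (z n).1 - toFun' f (z n).2))
      inferInstance

/-- Evaluation at a point of `X`, as a linear functional on `Lip₀(X)`. -/
def evalLM (x : X) : lip0 X x₀ ℝ →ₗ[ℝ] ℝ where
  toFun f := toFun' f x
  map_add' f g := rfl
  map_smul' c f := rfl

/-- Evaluation at a point of `X`, as a continuous linear functional on `Lip₀(X)`. -/
def evalCLM (x : X) : lip0 X x₀ ℝ →L[ℝ] ℝ :=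
  LinearMap.mkContinuous (evalLM X x₀ x) (dist x x₀)
    (fun f => by
      have h0 : toFun' f x₀ = 0 := apply_base f
      have h := norm_sub_le_lipNorm (x₀ := x₀) f x x₀
      rw [h0, sub_zero] at h
      calc ‖evalLM X x₀ x f‖ ≤ lipNorm X x₀ ℝ f * dist x x₀ := h
        _ = dist x x₀ * ‖f‖ := by rw [lip0_norm_def, mul_comm])

/-- The Lipschitz-free space `F(X)`: the closed linear span of the evaluation
functionals inside the dual of `Lip₀(X)`. -/
def freeSpace : Submodule ℝ (lip0 X x₀ ℝ →L[ℝ] ℝ) :=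
  (Submodule.span ℝ (Set.range (evalCLM X x₀))).topologicalClosure

/-- The Dirac map `δ : X → F(X)`. -/
def deltaF (x : X) : freeSpace X x₀ :=
  ⟨evalCLM X x₀ x,
    Submodule.le_topologicalClosure _ (Submodule.subset_span (Set.mem_range_self x))⟩

/-- For a normed space `G`, the topology on the dual `G'` of uniform convergence on the
convex balanced compact subsets of `G` (the topology of `G'_c`). -/
def dualcTop (G : Type*) [NormedAddCommGroup G] [NormedSpace ℝ G] :
    TopologicalSpace (G →L[ℝ] ℝ) :=
  TopologicalSpace.induced
    (fun φ => UniformOnFun.ofFun {L : Set G | IsCompact L ∧ Convex ℝ L ∧ Balanced ℝ L} ⇑φ)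
    inferInstance


/-- The weak* topology `σ(Lip₀(X), F(X))` on `Lip₀(X)`. -/
def tauWeakStar (X : Type*) [MetricSpace X] (x₀ : X) :
    TopologicalSpace (lip0 X x₀ ℝ) :=
  TopologicalSpace.induced
    (fun f => fun φ : freeSpace X x₀ => φ.1 f) Pi.topologicalSpace

/-! ### Auxiliary material for `stmt9` -/

section Stmt9Aux

variable {X : Type*} [MetricSpace X] {x₀ : X}

lemma toFun'_sub (f g : lip0 X x₀ ℝ) : toFun' (f - g) = toFun' f - toFun' g := rfl

lemma norm_le_iff' {f : lip0 X x₀ ℝ} {r : ℝ} (hr : 0 ≤ r) :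
    ‖f‖ ≤ r ↔ ∀ x y : X, |toFun' f x - toFun' f y| ≤ r * dist x y := by
  constructor
  · intro h x y
    have h2 := norm_sub_le_lipNorm (x₀ := x₀) f x y
    rw [← lip0_norm_def] at h2
    calc |toFun' f x - toFun' f y| = ‖toFun' f x - toFun' f y‖ := (Real.norm_eq_abs _).symm
      _ ≤ ‖f‖ * dist x y := h2
      _ ≤ r * dist x y := by
          have := dist_nonneg (x := x) (y := y); nlinarith
  · intro h
    rw [lip0_norm_def]
    haveI : Nonempty (X × X) := nonempty_pairs x₀
    apply ciSup_le
    intro p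
    rcases eq_or_ne p.1 p.2 with hp | hp
    · simp [hp, hr]
    · rw [div_le_iff₀ (dist_pos.2 hp), Real.norm_eq_abs]
      exact h p.1 p.2

lemma abs_apply_le_norm (f : lip0 X x₀ ℝ) (x : X) : |toFun' f x| ≤ ‖f‖ * dist x x₀ := by
  have h := norm_sub_le_lipNorm (x₀ := x₀) f x x₀
  rw [← lip0_norm_def, apply_base, sub_zero, Real.norm_eq_abs] at h
  exact h

/-- The pointwise-convergence topology on `lip0 X x₀ ℝ`. -/
def tPt (X : Type*) [MetricSpace X] (x₀ : X) : TopologicalSpace (lip0 X x₀ ℝ) :=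
  TopologicalSpace.induced (toFun' : lip0 X x₀ ℝ → X → ℝ) Pi.topologicalSpace

lemma nhds_tPt (f : lip0 X x₀ ℝ) :
    @nhds _ (tPt X x₀) f = Filter.comap toFun' (nhds (toFun' f)) := nhds_induced _ _

lemma tendsto_toFun'_tPt (f : lip0 X x₀ ℝ) :
    Tendsto toFun' (@nhds _ (tPt X x₀) f) (nhds (toFun' f)) := by
  rw [nhds_tPt]; exact tendsto_comap

lemma tau0_le_tPt : tau0 X x₀ ℝ ≤ tPt X x₀ := by
  have h2 : Continuous ((⇑) : C(X, ℝ) → X → ℝ) := continuous_coeFun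
  have h3 : (ContinuousMap.compactOpen : TopologicalSpace C(X, ℝ)) ≤
      TopologicalSpace.induced ((⇑) : C(X, ℝ) → X → ℝ) Pi.topologicalSpace :=
    continuous_iff_le_induced.mp h2
  calc tau0 X x₀ ℝ
      = TopologicalSpace.induced (toCM X x₀ ℝ) ContinuousMap.compactOpen := rfl
    _ ≤ TopologicalSpace.induced (toCM X x₀ ℝ)
        (TopologicalSpace.induced ((⇑) : C(X, ℝ) → X → ℝ) Pi.topologicalSpace) :=
        induced_mono h3
    _ = tPt X x₀ := by rw [induced_compose]; rfl

lemma tauW_le_tPt : tauWeakStar X x₀ ≤ tPt X x₀ := by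
  have h2 : Continuous (fun (u : freeSpace X x₀ → ℝ) => fun x : X => u (deltaF X x₀ x)) :=
    continuous_pi fun x => continuous_apply _
  have h3 : (Pi.topologicalSpace : TopologicalSpace (freeSpace X x₀ → ℝ)) ≤
      TopologicalSpace.induced (fun (u : freeSpace X x₀ → ℝ) => fun x : X => u (deltaF X x₀ x))
        Pi.topologicalSpace :=
    continuous_iff_le_induced.mp h2
  calc tauWeakStar X x₀
      = TopologicalSpace.induced (fun f => fun φ : freeSpace X x₀ => φ.1 f)
          Pi.topologicalSpace := rfl
    _ ≤ TopologicalSpace.induced (fun f => fun φ : freeSpace X x₀ => φ.1 f)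
        (TopologicalSpace.induced
          (fun (u : freeSpace X x₀ → ℝ) => fun x : X => u (deltaF X x₀ x))
          Pi.topologicalSpace) := induced_mono h3
    _ = tPt X x₀ := by rw [induced_compose]; rfl

/-- Basic `τ₀`-neighbourhood of `0`. -/
def NN (x₀ : X) (K : Set X) (ε : ℝ) : Set (lip0 X x₀ ℝ) :=
  {f | ∀ x ∈ K, |toFun' f x| < ε}

lemma tau0_hasBasis (f : lip0 X x₀ ℝ) :
    (@nhds _ (tau0 X x₀ ℝ) f).HasBasis (fun p : Set X × ℝ => IsCompact p.1 ∧ 0 < p.2)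
      (fun p => {g | ∀ x ∈ p.1, |toFun' g x - toFun' f x| < p.2}) := by
  have h0 : @nhds _ (tau0 X x₀ ℝ) f = Filter.comap (toCM X x₀ ℝ) (nhds (toCM X x₀ ℝ f)) :=
    nhds_induced _ _
  rw [h0]
  have hb := Filter.HasBasis.compactConvergenceUniformity (α := X) (β := ℝ)
      Metric.uniformity_basis_dist
  have hb2 := nhds_basis_uniformity' hb (x := toCM X x₀ ℝ f)
  refine (hb2.comap _).to_hasBasis (fun p hp => ⟨p, hp, ?_⟩) (fun p hp => ⟨p, hp, ?_⟩)
  · intro g hg x hx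
    have h5 := hg x hx
    rw [abs_sub_comm] at h5
    simp [Real.dist_eq] at h5 ⊢
    exact h5
  · intro g hg x hx
    have h6 := hg x hx
    have h7 : dist (toFun' f x) (toFun' g x) < p.2 := h6
    rw [Real.dist_eq, abs_sub_comm] at h7
    exact h7

lemma NN_mem_nhds {K : Set X} {ε : ℝ} (hK : IsCompact K) (hε : 0 < ε) :
    NN x₀ K ε ∈ @nhds _ (tau0 X x₀ ℝ) 0 := by
  refine Filter.mem_of_superset (((tau0_hasBasis (x₀ := x₀) 0).mem_of_mem
    (i := (K, ε)) ⟨hK, hε⟩)) ?_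
  intro g hg x hx
  have := hg x hx
  rw [toFun'_zero] at this
  simpa using this

lemma NN_convex {K : Set X} {ε : ℝ} : Convex ℝ (NN (X := X) x₀ K ε) := by
  intro f hf g hg a b ha hb hab
  intro x hx
  have h1 : toFun' (a • f + b • g) x = a * toFun' f x + b * toFun' g x := by
    rw [toFun'_add, toFun'_smul, toFun'_smul]; simp
  rw [h1]
  calc |a * toFun' f x + b * toFun' g x| ≤ |a * toFun' f x| + |b * toFun' g x| := abs_add_le _ _
    _ = a * |toFun' f x| + b * |toFun' g x| := by
        rw [abs_mul, abs_mul, abs_of_nonneg ha, abs_of_nonneg hb]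
    _ < a * ε + b * ε := by
        rcases eq_or_lt_of_le ha with rfl | ha'
        · rcases eq_or_lt_of_le hb with rfl | hb'
          · simp at hab
          · simp only [zero_mul, zero_add]
            exact mul_lt_mul_of_pos_left (hg x hx) hb'
        · rcases eq_or_lt_of_le hb with rfl | hb'
          · simp only [zero_mul, add_zero]
            exact mul_lt_mul_of_pos_left (hf x hx) ha'
          · exact add_lt_add (mul_lt_mul_of_pos_left (hf x hx) ha')
              (mul_lt_mul_of_pos_left (hg x hx) hb')
    _ = ε := by rw [← add_mul, hab, one_mul]

lemma NN_balanced {K : Set X} {ε : ℝ} : Balanced ℝ (NN (X := X) x₀ K ε) := by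
  intro a ha
  rintro g ⟨f, hf, rfl⟩
  intro x hx
  have h1 : toFun' (a • f) x = a * toFun' f x := by rw [toFun'_smul]; simp
  rw [h1, abs_mul]
  rw [Real.norm_eq_abs] at ha
  calc |a| * |toFun' f x| ≤ 1 * |toFun' f x| :=
        mul_le_mul_of_nonneg_right ha (abs_nonneg _)
    _ = |toFun' f x| := one_mul _
    _ < ε := hf x hx

lemma image_add_NN (f : lip0 X x₀ ℝ) (K : Set X) (ε : ℝ) :
    (f + ·) '' NN x₀ K ε = {g | ∀ x ∈ K, |toFun' g x - toFun' f x| < ε} := by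
  ext g
  constructor
  · rintro ⟨h, hh, rfl⟩ x hx
    have : toFun' (f + h) x - toFun' f x = toFun' h x := by rw [toFun'_add]; simp
    rw [this]; exact hh x hx
  · intro hg
    refine ⟨g - f, fun x hx => ?_, by module⟩
    have : toFun' (g - f) x = toFun' g x - toFun' f x := by rw [toFun'_sub]; simp
    rw [this]; exact hg x hx

lemma relNhds_pt_le_tau0 {B : Set (lip0 X x₀ ℝ)} {C : ℝ} (hB : ∀ g ∈ B, ‖g‖ ≤ C)
    {f : lip0 X x₀ ℝ} (hf : f ∈ B) :
    @nhds _ (tPt X x₀) f ⊓ 𝓟 B ≤ @nhds _ (tau0 X x₀ ℝ) f ⊓ 𝓟 B := by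
  have hC0 : 0 ≤ C := le_trans (norm_nonneg f) (hB f hf)
  refine le_inf ?_ inf_le_right
  rw [(tau0_hasBasis f).ge_iff]
  rintro ⟨K, ε⟩ ⟨hK, hε⟩
  set δ : ℝ := ε / (4 * C + 4) with hδdef
  have hδ : 0 < δ := by positivity
  obtain ⟨D, hDfin, hDsub⟩ := Metric.totallyBounded_iff.1 hK.totallyBounded δ hδ
  have hCδ : 2 * (C * δ) ≤ ε / 2 := by
    rw [hδdef]
    rw [show 2 * (C * (ε / (4 * C + 4))) = (2 * C * ε) / (4 * C + 4) by ring]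
    rw [div_le_div_iff₀ (by linarith) (by norm_num)]
    nlinarith [hε.le]
  have hM : {g : lip0 X x₀ ℝ | ∀ y ∈ D, |toFun' g y - toFun' f y| < ε / 2} ∈
      @nhds _ (tPt X x₀) f := by
    have hev : ∀ᶠ g in @nhds _ (tPt X x₀) f, ∀ y ∈ D, |toFun' g y - toFun' f y| < ε / 2 := by
      rw [Filter.eventually_all_finite hDfin]
      intro y hy
      have hty : Tendsto (fun g : lip0 X x₀ ℝ => toFun' g y) (@nhds _ (tPt X x₀) f)
          (nhds (toFun' f y)) :=
        ((continuous_apply y).tendsto (toFun' f)).comp (tendsto_toFun'_tPt f)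
      have hball : ∀ᶠ r in nhds (toFun' f y), |r - toFun' f y| < ε / 2 := by
        have h8 := Metric.ball_mem_nhds (toFun' f y) (by positivity : (0:ℝ) < ε / 2)
        rw [Filter.eventually_iff]
        simpa [Metric.ball, Real.dist_eq] using h8
      exact hty.eventually hball
    exact hev
  refine Filter.mem_of_superset (Filter.inter_mem_inf hM (Filter.mem_principal_self B)) ?_
  rintro g ⟨hgM, hgB⟩ x hx
  obtain ⟨y, hyD, hxy⟩ : ∃ y ∈ D, dist x y < δ := by
    have := hDsub hx
    simpa using this
  have h1 : |toFun' g x - toFun' g y| ≤ C * δ := by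
    have := (norm_le_iff' (f := g) hC0).1 (hB g hgB) x y
    nlinarith [dist_nonneg (x := x) (y := y)]
  have h2 : |toFun' f x - toFun' f y| ≤ C * δ := by
    have := (norm_le_iff' (f := f) hC0).1 (hB f hf) x y
    nlinarith [dist_nonneg (x := x) (y := y)]
  have h3 := hgM y hyD
  calc |toFun' g x - toFun' f x|
      = |(toFun' g x - toFun' g y) + (toFun' g y - toFun' f y) + (toFun' f y - toFun' f x)| :=
        by ring_nf
    _ ≤ |toFun' g x - toFun' g y| + |toFun' g y - toFun' f y| + |toFun' f y - toFun' f x| := by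
        exact (abs_add_le _ _).trans (by gcongr; exact abs_add_le _ _)
    _ < C * δ + ε / 2 + C * δ := by
        rw [abs_sub_comm (toFun' f y)]
        refine add_lt_add_of_lt_of_le (add_lt_add_of_le_of_lt h1 h3) h2
    _ ≤ ε := by linarith

lemma span_eval_factor {ψ : lip0 X x₀ ℝ →L[ℝ] ℝ}
    (hψ : ψ ∈ Submodule.span ℝ (Set.range (evalCLM X x₀))) :
    ∃ F : (X → ℝ) → ℝ, Continuous F ∧ ∀ g, ψ g = F (toFun' g) := by
  induction hψ using Submodule.span_induction with
  | mem ψ h =>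
      obtain ⟨x, rfl⟩ := h
      exact ⟨fun u => u x, continuous_apply x, fun g => rfl⟩
  | zero => exact ⟨fun _ => 0, continuous_const, fun g => rfl⟩
  | add ψ₁ ψ₂ h₁ h₂ ih₁ ih₂ =>
      obtain ⟨F1, hF1, e1⟩ := ih₁
      obtain ⟨F2, hF2, e2⟩ := ih₂
      exact ⟨F1 + F2, hF1.add hF2, fun g => by
        simp [ContinuousLinearMap.add_apply, e1 g, e2 g]⟩
  | smul c ψ₁ h₁ ih₁ =>
      obtain ⟨F1, hF1, e1⟩ := ih₁
      exact ⟨fun u => c * F1 u, continuous_const.mul hF1, fun g => by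
        simp [ContinuousLinearMap.smul_apply, e1 g]⟩

lemma tendsto_span_pt {ψ : lip0 X x₀ ℝ →L[ℝ] ℝ}
    (hψ : ψ ∈ Submodule.span ℝ (Set.range (evalCLM X x₀))) (f : lip0 X x₀ ℝ) :
    Tendsto (fun g => ψ g) (@nhds _ (tPt X x₀) f) (nhds (ψ f)) := by
  obtain ⟨F, hF, he⟩ := span_eval_factor hψ
  have h1 : Tendsto (fun g : lip0 X x₀ ℝ => F (toFun' g)) (@nhds _ (tPt X x₀) f)
      (nhds (F (toFun' f))) :=
    (hF.tendsto (toFun' f)).comp (tendsto_toFun'_tPt f)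
  rw [he f]
  exact h1.congr fun g => (he g).symm

lemma relNhds_pt_le_tauW {B : Set (lip0 X x₀ ℝ)} {C : ℝ} (hB : ∀ g ∈ B, ‖g‖ ≤ C)
    {f : lip0 X x₀ ℝ} (hf : f ∈ B) :
    @nhds _ (tPt X x₀) f ⊓ 𝓟 B ≤ @nhds _ (tauWeakStar X x₀) f ⊓ 𝓟 B := by
  have hC0 : 0 ≤ C := le_trans (norm_nonneg f) (hB f hf)
  refine le_inf ?_ inf_le_right
  have h0 : @nhds _ (tauWeakStar X x₀) f =
      Filter.comap (fun f => fun φ : freeSpace X x₀ => φ.1 f)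
        (nhds (fun φ : freeSpace X x₀ => φ.1 f)) := nhds_induced _ _
  rw [h0, ← Filter.map_le_iff_le_comap]
  rw [show Filter.map (fun f => fun φ : freeSpace X x₀ => φ.1 f)
      (@nhds _ (tPt X x₀) f ⊓ 𝓟 B) ≤
      nhds (fun φ : freeSpace X x₀ => φ.1 f) ↔ Tendsto
      (fun f => fun φ : freeSpace X x₀ => φ.1 f) (@nhds _ (tPt X x₀) f ⊓ 𝓟 B)
      (nhds (fun φ : freeSpace X x₀ => φ.1 f)) from Iff.rfl]
  rw [tendsto_pi_nhds]
  intro φ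
  rw [Metric.tendsto_nhds]
  intro ε hε
  -- approximate φ.1 by an element of the span
  have hmem : (φ.1 : lip0 X x₀ ℝ →L[ℝ] ℝ) ∈
      closure ((Submodule.span ℝ (Set.range (evalCLM X x₀)) : Submodule ℝ _) : Set _) := by
    have h10 : (φ.1 : lip0 X x₀ ℝ →L[ℝ] ℝ) ∈
        (Submodule.span ℝ (Set.range (evalCLM X x₀))).topologicalClosure := φ.2
    rwa [← Submodule.topologicalClosure_coe]
  rw [Metric.mem_closure_iff] at hmem
  set δ : ℝ := ε / (4 * C + 4) with hδdef
  have hδ : 0 < δ := by positivity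
  obtain ⟨ψ, hψmem, hψdist⟩ := hmem δ hδ
  have hCδ : 2 * C * δ ≤ ε / 2 := by
    rw [hδdef]
    rw [show 2 * C * (ε / (4 * C + 4)) = (2 * C * ε) / (4 * C + 4) by ring]
    rw [div_le_div_iff₀ (by linarith) (by norm_num)]
    nlinarith [hε.le]
  have hev1 : ∀ᶠ g in @nhds _ (tPt X x₀) f ⊓ 𝓟 B, |ψ g - ψ f| < ε / 4 := by
    refine Filter.Eventually.filter_mono inf_le_left ?_
    have hty := tendsto_span_pt hψmem f
    have hball : ∀ᶠ r in nhds (ψ f), |r - ψ f| < ε / 4 := by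
      have h8 := Metric.ball_mem_nhds (ψ f) (by positivity : (0:ℝ) < ε / 4)
      rw [Filter.eventually_iff]
      simpa [Metric.ball, Real.dist_eq] using h8
    exact hty.eventually hball
  have hev2 : ∀ᶠ g in @nhds _ (tPt X x₀) f ⊓ 𝓟 B, g ∈ B :=
    Filter.Eventually.filter_mono inf_le_right (Filter.eventually_mem_set.2
      (Filter.mem_principal_self B))
  filter_upwards [hev1, hev2] with g hg1 hg2
  have hnorm : ‖(φ.1 : lip0 X x₀ ℝ →L[ℝ] ℝ) - ψ‖ < δ := by
    rwa [dist_eq_norm] at hψdist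
  have hb1 : |φ.1 g - ψ g| ≤ δ * C := by
    have h9 := ((φ.1 : lip0 X x₀ ℝ →L[ℝ] ℝ) - ψ).le_opNorm g
    rw [ContinuousLinearMap.sub_apply] at h9
    rw [← Real.norm_eq_abs]
    calc ‖φ.1 g - ψ g‖ ≤ ‖(φ.1 : lip0 X x₀ ℝ →L[ℝ] ℝ) - ψ‖ * ‖g‖ := h9
      _ ≤ δ * C := by
          have := hB g hg2
          have := norm_nonneg g
          nlinarith
  have hb2 : |φ.1 f - ψ f| ≤ δ * C := by
    have h9 := ((φ.1 : lip0 X x₀ ℝ →L[ℝ] ℝ) - ψ).le_opNorm f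
    rw [ContinuousLinearMap.sub_apply] at h9
    rw [← Real.norm_eq_abs]
    calc ‖φ.1 f - ψ f‖ ≤ ‖(φ.1 : lip0 X x₀ ℝ →L[ℝ] ℝ) - ψ‖ * ‖f‖ := h9
      _ ≤ δ * C := by
          have := hB f hf
          have := norm_nonneg f
          nlinarith
  rw [Real.dist_eq]
  calc |φ.1 g - φ.1 f|
      = |(φ.1 g - ψ g) + (ψ g - ψ f) + (ψ f - φ.1 f)| := by ring_nf
    _ ≤ |φ.1 g - ψ g| + |ψ g - ψ f| + |ψ f - φ.1 f| :=
        (abs_add_le _ _).trans (by gcongr; exact abs_add_le _ _)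
    _ < δ * C + ε / 4 + δ * C := by
        rw [abs_sub_comm (ψ f)]
        exact add_lt_add_of_lt_of_le (add_lt_add_of_le_of_lt hb1 hg1) hb2
    _ ≤ ε := by linarith

lemma relNhds_tau0_eq_pt {B : Set (lip0 X x₀ ℝ)} {C : ℝ} (hB : ∀ g ∈ B, ‖g‖ ≤ C)
    {f : lip0 X x₀ ℝ} (hf : f ∈ B) :
    @nhds _ (tau0 X x₀ ℝ) f ⊓ 𝓟 B = @nhds _ (tPt X x₀) f ⊓ 𝓟 B :=
  le_antisymm (inf_le_inf_right _ (nhds_mono tau0_le_tPt)) (relNhds_pt_le_tau0 hB hf)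

lemma relNhds_tauW_eq_pt {B : Set (lip0 X x₀ ℝ)} {C : ℝ} (hB : ∀ g ∈ B, ‖g‖ ≤ C)
    {f : lip0 X x₀ ℝ} (hf : f ∈ B) :
    @nhds _ (tauWeakStar X x₀) f ⊓ 𝓟 B = @nhds _ (tPt X x₀) f ⊓ 𝓟 B :=
  le_antisymm (inf_le_inf_right _ (nhds_mono tauW_le_tPt)) (relNhds_pt_le_tauW hB hf)

/-- Validity condition on the sequences of neighbourhoods in `tauGamma`. -/
def Valid (x₀ : X) (U : ℕ → Set (lip0 X x₀ ℝ)) : Prop :=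
  ∀ n, U n ∈ @nhds _ (tau0 X x₀ ℝ) 0 ∧ Convex ℝ (U n) ∧ Balanced ℝ (U n)

lemma nGamma_le_nhds_tauGamma (f : lip0 X x₀ ℝ) :
    (⨅ (U : ℕ → Set (lip0 X x₀ ℝ)) (_ : Valid x₀ U),
      𝓟 ((f + ·) '' gammaSet X x₀ ℝ U)) ≤ @nhds _ (tauGamma X x₀ ℝ) f := by
  refine (@nhds_basis_opens _ (tauGamma X x₀ ℝ) f).ge_iff.2 ?_
  rintro V ⟨hfV, hVo⟩
  exact hVo f hfV

lemma isOpen_tauGamma_iff {s : Set (lip0 X x₀ ℝ)} :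
    IsOpen[tauGamma X x₀ ℝ] s ↔ ∀ f ∈ s,
      s ∈ ⨅ (U : ℕ → Set (lip0 X x₀ ℝ)) (_ : Valid x₀ U),
        𝓟 ((f + ·) '' gammaSet X x₀ ℝ U) :=
  Iff.rfl

lemma sum_sets_mono {ι : Type*} (t : Finset ι) {A B : ι → Set (lip0 X x₀ ℝ)}
    (h : ∀ i ∈ t, A i ⊆ B i) : ∑ i ∈ t, A i ⊆ ∑ i ∈ t, B i := by
  intro a ha
  rw [Set.mem_finset_sum] at ha ⊢
  obtain ⟨g, hg, rfl⟩ := ha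
  exact ⟨g, fun {i} hi => h i hi (hg hi), rfl⟩

lemma gammaSet_mono {U V : ℕ → Set (lip0 X x₀ ℝ)} (h : ∀ n, U n ⊆ V n) :
    gammaSet X x₀ ℝ U ⊆ gammaSet X x₀ ℝ V :=
  Set.iUnion_mono fun n => sum_sets_mono _ fun i _ =>
    Set.inter_subset_inter (h i) Set.Subset.rfl

lemma exists_gamma_subset_of_mem {f : lip0 X x₀ ℝ} {s : Set (lip0 X x₀ ℝ)}
    (hs : s ∈ ⨅ (U : ℕ → Set (lip0 X x₀ ℝ)) (_ : Valid x₀ U),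
      𝓟 ((f + ·) '' gammaSet X x₀ ℝ U)) :
    ∃ U, Valid x₀ U ∧ (f + ·) '' gammaSet X x₀ ℝ U ⊆ s := by
  rw [iInf_subtype'] at hs
  haveI : Nonempty {U : ℕ → Set (lip0 X x₀ ℝ) // Valid x₀ U} :=
    ⟨⟨fun _ => Set.univ, fun n => ⟨Filter.univ_mem, convex_univ, balanced_univ⟩⟩⟩
  have hdir : Directed (· ≥ ·)
      (fun U : {U : ℕ → Set (lip0 X x₀ ℝ) // Valid x₀ U} =>
        𝓟 ((f + ·) '' gammaSet X x₀ ℝ U.1)) := by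
    rintro ⟨U, hU⟩ ⟨V, hV⟩
    refine ⟨⟨fun n => U n ∩ V n, fun n =>
      ⟨Filter.inter_mem (hU n).1 (hV n).1, (hU n).2.1.inter (hV n).2.1,
        (hU n).2.2.inter (hV n).2.2⟩⟩, ?_, ?_⟩
    · exact Filter.principal_mono.2
        (Set.image_mono (gammaSet_mono fun n => Set.inter_subset_left))
    · exact Filter.principal_mono.2
        (Set.image_mono (gammaSet_mono fun n => Set.inter_subset_right))
  obtain ⟨⟨U, hU⟩, hmem⟩ := (Filter.mem_iInf_of_directed hdir s).1 hs
  exact ⟨U, hU, Filter.mem_principal.1 hmem⟩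

lemma mem_nGamma_of_valid (f : lip0 X x₀ ℝ) {U : ℕ → Set (lip0 X x₀ ℝ)}
    (hU : Valid x₀ U) {s : Set (lip0 X x₀ ℝ)} (hsub : (f + ·) '' gammaSet X x₀ ℝ U ⊆ s) :
    s ∈ ⨅ (U : ℕ → Set (lip0 X x₀ ℝ)) (_ : Valid x₀ U),
      𝓟 ((f + ·) '' gammaSet X x₀ ℝ U) := by
  have h1 : (⨅ (U : ℕ → Set (lip0 X x₀ ℝ)) (_ : Valid x₀ U),
      𝓟 ((f + ·) '' gammaSet X x₀ ℝ U)) ≤ 𝓟 ((f + ·) '' gammaSet X x₀ ℝ U) :=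
    iInf_le_of_le U (iInf_le _ hU)
  exact Filter.mem_of_superset (Filter.le_principal_iff.1 h1) hsub

lemma toFun'_finsetSum {ι : Type*} (t : Finset ι) (g : ι → lip0 X x₀ ℝ) :
    toFun' (∑ i ∈ t, g i) = ∑ i ∈ t, toFun' (g i) := by
  classical
  induction t using Finset.induction_on with
  | empty => simp [toFun'_zero]
  | insert _ _ h ih => rw [Finset.sum_insert h, Finset.sum_insert h, toFun'_add, ih]

lemma gammaSet_abs_bound {K : Set X} {ε : ℝ} (hε : 0 < ε)
    {h : lip0 X x₀ ℝ} (hh : h ∈ gammaSet X x₀ ℝ (fun n => NN x₀ K (ε / 2 ^ (n + 2))))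
    {x : X} (hx : x ∈ K) : |toFun' h x| < ε := by
  obtain ⟨n, hn⟩ := Set.mem_iUnion.1 hh
  rw [Set.mem_finset_sum] at hn
  obtain ⟨g, hg, rfl⟩ := hn
  rw [toFun'_finsetSum]
  rw [Finset.sum_apply]
  calc |∑ i ∈ Finset.range (n + 1), toFun' (g i) x|
      ≤ ∑ i ∈ Finset.range (n + 1), |toFun' (g i) x| := Finset.abs_sum_le_sum_abs _ _
    _ ≤ ∑ i ∈ Finset.range (n + 1), ε / 2 ^ (i + 2) := by
        refine Finset.sum_le_sum fun i hi => ?_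
        exact le_of_lt ((hg hi).1 x hx)
    _ = ε / 4 * ∑ i ∈ Finset.range (n + 1), (1 / 2 : ℝ) ^ i := by
        rw [Finset.mul_sum]
        refine Finset.sum_congr rfl fun i _ => ?_
        rw [div_pow, one_pow, pow_add]
        ring
    _ ≤ ε / 4 * 2 := by
        have := sum_geometric_two_le (n + 1)
        have h4 : (0:ℝ) ≤ ε / 4 := by positivity
        nlinarith
    _ < ε := by linarith

lemma zero_mem_of_nhds_tau0 {U : Set (lip0 X x₀ ℝ)}
    (h : U ∈ @nhds _ (tau0 X x₀ ℝ) 0) : (0 : lip0 X x₀ ℝ) ∈ U := by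
  obtain ⟨⟨K, ε⟩, ⟨hK, hε⟩, hsub⟩ := (tau0_hasBasis (x₀ := x₀) 0).mem_iff.1 h
  refine hsub ?_
  intro x hx
  simpa using hε

lemma tauGamma_le_tau0 : tauGamma X x₀ ℝ ≤ tau0 X x₀ ℝ := by
  rw [TopologicalSpace.le_def]
  intro s hs
  rw [isOpen_tauGamma_iff]
  intro f hf
  have hmem : s ∈ @nhds _ (tau0 X x₀ ℝ) f := @IsOpen.mem_nhds _ (tau0 X x₀ ℝ) f s hs hf
  obtain ⟨⟨K, ε⟩, ⟨hK, hε⟩, hsub⟩ := (tau0_hasBasis f).mem_iff.1 hmem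
  refine mem_nGamma_of_valid f
    (U := fun n => NN x₀ K (ε / 2 ^ (n + 2)))
    (fun n => ⟨NN_mem_nhds hK (by positivity), NN_convex, NN_balanced⟩) ?_
  rintro g ⟨h, hh, rfl⟩
  refine hsub ?_
  intro x hx
  have h1 : toFun' (f + h) x - toFun' f x = toFun' h x := by rw [toFun'_add]; simp
  rw [h1]
  exact gammaSet_abs_bound hε hh hx

lemma relNhds_tau0_le_tauGamma {B : Set (lip0 X x₀ ℝ)} {C : ℝ} (hB : ∀ g ∈ B, ‖g‖ ≤ C)
    {f : lip0 X x₀ ℝ} (hf : f ∈ B) :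
    @nhds _ (tau0 X x₀ ℝ) f ⊓ 𝓟 B ≤ @nhds _ (tauGamma X x₀ ℝ) f ⊓ 𝓟 B := by
  have hC0 : 0 ≤ C := le_trans (norm_nonneg f) (hB f hf)
  refine le_inf ?_ inf_le_right
  intro N hN
  have hN' := nGamma_le_nhds_tauGamma f hN
  obtain ⟨U, hU, hsub⟩ := exists_gamma_subset_of_mem hN'
  obtain ⟨m, hm⟩ := pow_unbounded_of_one_lt (2 * C) (one_lt_two (α := ℝ))
  obtain ⟨⟨K, ε⟩, ⟨hK, hε⟩, hsubU⟩ := (tau0_hasBasis (x₀ := x₀) 0).mem_iff.1 (hU m).1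
  have hMmem : {g : lip0 X x₀ ℝ | ∀ x ∈ K, |toFun' g x - toFun' f x| < ε} ∈
      @nhds _ (tau0 X x₀ ℝ) f := (tau0_hasBasis f).mem_of_mem (i := (K, ε)) ⟨hK, hε⟩
  rw [Filter.mem_inf_iff_superset]
  refine ⟨_, hMmem, B, Filter.mem_principal_self B, ?_⟩
  rintro g ⟨hgM, hgB⟩
  refine hsub ?_
  set h : lip0 X x₀ ℝ := g - f with hhdef
  have hhU : h ∈ U m := by
    refine hsubU ?_
    intro x hx
    have h2 : toFun' h x - toFun' (0 : lip0 X x₀ ℝ) x = toFun' g x - toFun' f x := by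
      rw [toFun'_zero, hhdef, toFun'_sub]; simp
    rw [h2]
    exact hgM x hx
  have hhnorm : ‖h‖ ≤ 2 ^ m := by
    calc ‖h‖ ≤ ‖g‖ + ‖f‖ := norm_sub_le _ _
      _ ≤ C + C := add_le_add (hB g hgB) (hB f hf)
      _ ≤ 2 ^ m := by nlinarith
  have hgamma : h ∈ gammaSet X x₀ ℝ U := by
    refine Set.mem_iUnion.2 ⟨m, ?_⟩
    rw [Set.mem_finset_sum]
    classical
    refine ⟨fun i => if i = m then h else 0, ?_, ?_⟩
    · intro i hi
      by_cases him : i = m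
      · subst him
        simp only [if_pos rfl]
        exact ⟨hhU, hhnorm⟩
      · simp only [if_neg him]
        exact ⟨zero_mem_of_nhds_tau0 (hU i).1, by simp⟩
    · rw [Finset.sum_ite_eq' (Finset.range (m + 1)) m]
      simp
  exact ⟨h, hgamma, by rw [hhdef]; module⟩

lemma relNhds_tauGamma_eq_tau0 {B : Set (lip0 X x₀ ℝ)} {C : ℝ} (hB : ∀ g ∈ B, ‖g‖ ≤ C)
    {f : lip0 X x₀ ℝ} (hf : f ∈ B) :
    @nhds _ (tauGamma X x₀ ℝ) f ⊓ 𝓟 B = @nhds _ (tau0 X x₀ ℝ) f ⊓ 𝓟 B :=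
  le_antisymm (inf_le_inf_right _ (nhds_mono tauGamma_le_tau0)) (relNhds_tau0_le_tauGamma hB hf)

/-- Closed ball of radius `r` in `lip0`. -/
def cball (x₀ : X) (r : ℝ) : Set (lip0 X x₀ ℝ) := {f | ‖f‖ ≤ r}

lemma isCompact_transfer {t1 t2 : TopologicalSpace (lip0 X x₀ ℝ)} {B : Set (lip0 X x₀ ℝ)}
    (h : ∀ f ∈ B, @nhds _ t1 f ⊓ 𝓟 B = @nhds _ t2 f ⊓ 𝓟 B)
    (hc : @IsCompact _ t1 B) : @IsCompact _ t2 B := by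
  rw [@isCompact_iff_ultrafilter_le_nhds _ t1] at hc
  rw [@isCompact_iff_ultrafilter_le_nhds _ t2]
  intro F hF
  obtain ⟨a, haB, hle⟩ := hc F hF
  refine ⟨a, haB, ?_⟩
  have h1 : (F : Filter _) ≤ @nhds _ t1 a ⊓ 𝓟 B := le_inf hle hF
  rw [h a haB] at h1
  exact h1.trans inf_le_left

lemma isCompact_tPt_cball {r : ℝ} (hr : 0 ≤ r) : @IsCompact _ (tPt X x₀) (cball x₀ r) := by
  letI := tPt X x₀
  have hS : (toFun' : lip0 X x₀ ℝ → X → ℝ) '' cball x₀ r =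
      {u : X → ℝ | u x₀ = 0 ∧ ∀ x y, |u x - u y| ≤ r * dist x y} := by
    ext u
    constructor
    · rintro ⟨f, hf, rfl⟩
      exact ⟨apply_base f, fun x y => (norm_le_iff' hr).1 hf x y⟩
    · rintro ⟨h0, hlip⟩
      have hl : LipschitzWith r.toNNReal u := by
        apply LipschitzWith.of_dist_le_mul
        intro x y
        rw [Real.dist_eq, Real.coe_toNNReal r hr]
        exact hlip x y
      refine ⟨⟨u, ⟨⟨r.toNNReal, hl⟩, h0⟩⟩, ?_, rfl⟩
      exact (norm_le_iff' hr).2 hlip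
  have hcl : IsClosed {u : X → ℝ | u x₀ = 0 ∧ ∀ x y, |u x - u y| ≤ r * dist x y} := by
    rw [Set.setOf_and]
    apply IsClosed.inter
    · exact isClosed_eq (continuous_apply x₀) continuous_const
    · rw [Set.setOf_forall]
      refine isClosed_iInter fun x => ?_
      rw [Set.setOf_forall]
      refine isClosed_iInter fun y => ?_
      exact isClosed_le ((continuous_apply x).sub (continuous_apply y)).abs continuous_const
  have hsub : {u : X → ℝ | u x₀ = 0 ∧ ∀ x y, |u x - u y| ≤ r * dist x y} ⊆
      Set.pi Set.univ (fun x => Set.Icc (-(r * dist x x₀)) (r * dist x x₀)) := by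
    rintro u ⟨h0, hlip⟩ x _
    have h2 := hlip x x₀
    rw [h0, sub_zero] at h2
    exact abs_le.1 h2
  have hSc : IsCompact ((toFun' : lip0 X x₀ ℝ → X → ℝ) '' cball x₀ r) := by
    rw [hS]
    exact (isCompact_univ_pi fun x => isCompact_Icc).of_isClosed_subset hcl hsub
  have hind : Topology.IsInducing (toFun' : lip0 X x₀ ℝ → X → ℝ) := ⟨rfl⟩
  exact hind.isCompact_iff.2 hSc

lemma isClosed_tau0_cball {r : ℝ} (hr : 0 ≤ r) : IsOpen[tau0 X x₀ ℝ] (cball x₀ r)ᶜ := by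
  have h1 : IsOpen[tPt X x₀] (cball x₀ r)ᶜ := by
    have heq : cball x₀ r = (toFun' : lip0 X x₀ ℝ → X → ℝ) ⁻¹'
        {u : X → ℝ | ∀ x y, |u x - u y| ≤ r * dist x y} := by
      ext f
      exact norm_le_iff' hr
    have hcl : IsClosed {u : X → ℝ | ∀ x y, |u x - u y| ≤ r * dist x y} := by
      rw [Set.setOf_forall]
      refine isClosed_iInter fun x => ?_
      rw [Set.setOf_forall]
      refine isClosed_iInter fun y => ?_
      exact isClosed_le ((continuous_apply x).sub (continuous_apply y)).abs continuous_const
    rw [heq]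
    letI := tPt X x₀
    have hcont : Continuous (toFun' : lip0 X x₀ ℝ → X → ℝ) := continuous_induced_dom
    exact (hcl.preimage hcont).isOpen_compl
  exact tau0_le_tPt _ h1

lemma isCompact_tau0_cball {r : ℝ} (hr : 0 ≤ r) :
    @IsCompact _ (tau0 X x₀ ℝ) (cball x₀ r) :=
  isCompact_transfer (fun f hf => (relNhds_tau0_eq_pt (fun g hg => hg) hf).symm)
    (isCompact_tPt_cball hr)

lemma isCompact_tau0_add {C D : Set (lip0 X x₀ ℝ)}
    (hC : @IsCompact _ (tau0 X x₀ ℝ) C) (hD : @IsCompact _ (tau0 X x₀ ℝ) D) :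
    @IsCompact _ (tau0 X x₀ ℝ) (C + D) := by
  letI := tau0 X x₀ ℝ
  haveI : ContinuousAdd (lip0 X x₀ ℝ) := by
    constructor
    refine continuous_induced_rng (f := toCM X x₀ ℝ) |>.2 ?_
    have h1 : (toCM X x₀ ℝ) ∘ (fun p : lip0 X x₀ ℝ × lip0 X x₀ ℝ => p.1 + p.2) =
        fun p : lip0 X x₀ ℝ × lip0 X x₀ ℝ => toCM X x₀ ℝ p.1 + toCM X x₀ ℝ p.2 := by
      funext p
      exact ContinuousMap.ext fun x => rfl
    rw [h1]
    have hc : Continuous (toCM X x₀ ℝ) := continuous_induced_dom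
    exact (hc.comp continuous_fst).add (hc.comp continuous_snd)
  exact hC.add hD

lemma closure_NN_cball_subset {K : Set X} {ε r : ℝ} (hr : 0 ≤ r) (hε : 0 < ε) :
    @closure _ (tau0 X x₀ ℝ) (NN x₀ K (ε / 2) ∩ cball x₀ r) ⊆
      NN x₀ K ε ∩ cball x₀ r := by
  letI := tau0 X x₀ ℝ
  intro g hg
  constructor
  · intro x hx
    have hN : {g' : lip0 X x₀ ℝ | ∀ y ∈ ({x} : Set X), |toFun' g' y - toFun' g y| < ε / 4} ∈
        @nhds _ (tau0 X x₀ ℝ) g :=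
      (tau0_hasBasis g).mem_of_mem (i := ({x}, ε / 4)) ⟨isCompact_singleton, by positivity⟩
    obtain ⟨h, hh1, hh2⟩ := mem_closure_iff_nhds.1 hg _ hN
    have e1 : |toFun' h x - toFun' g x| < ε / 4 := hh1 x rfl
    have e2 : |toFun' h x| < ε / 2 := hh2.1 x hx
    calc |toFun' g x| = |toFun' h x - (toFun' h x - toFun' g x)| := by ring_nf
      _ ≤ |toFun' h x| + |toFun' h x - toFun' g x| := abs_sub _ _
      _ < ε / 2 + ε / 4 := add_lt_add e2 e1
      _ ≤ ε := by linarith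
  · have hclosed : IsClosed (cball (X := X) x₀ r) := ⟨isClosed_tau0_cball hr⟩
    exact closure_minimal Set.inter_subset_right hclosed hg

lemma step_lemma {s : Set (lip0 X x₀ ℝ)}
    (hs : ∀ f ∈ s, ∀ B : Set (lip0 X x₀ ℝ), NormBounded X x₀ ℝ B →
      ∃ K ε, IsCompact K ∧ 0 < ε ∧ ((f + ·) '' NN x₀ K ε) ∩ B ⊆ s)
    {C : Set (lip0 X x₀ ℝ)} (hCc : @IsCompact _ (tau0 X x₀ ℝ) C) (hCs : C ⊆ s)
    {m r : ℝ} (hm : 0 ≤ m) (hr : 0 ≤ r) (hCm : C ⊆ cball x₀ m) :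
    ∃ K ε, IsCompact K ∧ 0 < ε ∧ C + (NN x₀ K ε ∩ cball x₀ r) ⊆ s := by
  classical
  letI := tau0 X x₀ ℝ
  have hB : NormBounded X x₀ ℝ (cball x₀ (m + r)) := ⟨m + r, fun g hg => hg⟩
  have key : ∀ c : lip0 X x₀ ℝ, c ∈ C → ∃ K ε, IsCompact K ∧ 0 < ε ∧
      ((c + ·) '' NN x₀ K ε) ∩ cball x₀ (m + r) ⊆ s :=
    fun c hc => hs c (hCs hc) _ hB
  choose K ε hK hε hsub using key
  have hcov : ∀ (c : lip0 X x₀ ℝ) (hc : c ∈ C),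
      (c + ·) '' NN x₀ (K c hc) (ε c hc / 2) ∈ @nhds _ (tau0 X x₀ ℝ) c := by
    intro c hc
    rw [image_add_NN]
    exact (tau0_hasBasis c).mem_of_mem (i := (K c hc, ε c hc / 2))
      ⟨hK c hc, half_pos (hε c hc)⟩
  obtain ⟨t, hcover⟩ := hCc.elim_nhds_subcover' _ hcov
  rcases t.eq_empty_or_nonempty with rfl | hne
  · refine ⟨∅, 1, isCompact_empty, one_pos, ?_⟩
    have hCempty : C = ∅ := by
      refine Set.eq_empty_of_subset_empty ?_
      intro c hc
      simpa using hcover hc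
    rw [hCempty, Set.empty_add]
    exact Set.empty_subset _
  · refine ⟨⋃ c ∈ t, K c.1 c.2, t.inf' hne (fun c => ε c.1 c.2 / 2), ?_, ?_, ?_⟩
    · refine (↑t : Set C).toFinite.isCompact_biUnion fun c _ => hK c.1 c.2
    · rw [Finset.lt_inf'_iff]
      exact fun c _ => half_pos (hε c.1 c.2)
    · intro g hg
      rcases Set.mem_add.1 hg with ⟨c, hc, v, hv, rfl⟩
      obtain ⟨c₀, hc₀t, hcc₀⟩ : ∃ c₀ ∈ t, c ∈ (c₀.1 + ·) '' NN x₀ (K c₀.1 c₀.2) (ε c₀.1 c₀.2 / 2) := by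
        have := hcover hc
        simpa using this
      refine hsub c₀.1 c₀.2 ⟨?_, ?_⟩
      · rw [image_add_NN] at hcc₀ ⊢
        intro x hx
        have h1 : |toFun' c x - toFun' c₀.1 x| < ε c₀.1 c₀.2 / 2 := hcc₀ x hx
        have h2 : |toFun' v x| < t.inf' hne (fun c => ε c.1 c.2 / 2) := by
          refine hv.1 x ?_
          exact Set.mem_biUnion hc₀t hx
        have h3 : t.inf' hne (fun c => ε c.1 c.2 / 2) ≤ ε c₀.1 c₀.2 / 2 :=
          Finset.inf'_le _ hc₀t
        have h4 : toFun' (c + v) x - toFun' c₀.1 x =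
            (toFun' c x - toFun' c₀.1 x) + toFun' v x := by
          rw [toFun'_add]; simp; ring
        rw [h4]
        calc |(toFun' c x - toFun' c₀.1 x) + toFun' v x| ≤
            |toFun' c x - toFun' c₀.1 x| + |toFun' v x| := abs_add_le _ _
          _ < ε c₀.1 c₀.2 / 2 + ε c₀.1 c₀.2 / 2 := by
              refine add_lt_add h1 (lt_of_lt_of_le h2 h3)
          _ = ε c₀.1 c₀.2 := by ring
      · show ‖c + v‖ ≤ m + r
        calc ‖c + v‖ ≤ ‖c‖ + ‖v‖ := norm_add_le _ _
          _ ≤ m + r := add_le_add (hCm hc) hv.2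

lemma gamma_construction {s : Set (lip0 X x₀ ℝ)}
    (hs : ∀ f ∈ s, ∀ B : Set (lip0 X x₀ ℝ), NormBounded X x₀ ℝ B →
      ∃ K ε, IsCompact K ∧ 0 < ε ∧ ((f + ·) '' NN x₀ K ε) ∩ B ⊆ s)
    (h0 : (0 : lip0 X x₀ ℝ) ∈ s) :
    ∃ U, Valid x₀ U ∧ gammaSet X x₀ ℝ U ⊆ s := by
  classical
  letI := tau0 X x₀ ℝ
  let Good : ℕ → (Set (lip0 X x₀ ℝ) × Set X × ℝ) → Prop := fun n p =>
    IsCompact p.1 ∧ p.1 ⊆ s ∧ p.1 ⊆ cball x₀ (2 ^ n) ∧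
      IsCompact p.2.1 ∧ 0 < p.2.2 ∧ p.1 + (NN x₀ p.2.1 p.2.2 ∩ cball x₀ (2 ^ n)) ⊆ s
  have hnext : ∀ n (p : Set (lip0 X x₀ ℝ) × Set X × ℝ), Good n p →
      ∃ q : Set (lip0 X x₀ ℝ) × Set X × ℝ,
        q.1 = p.1 + closure (NN x₀ p.2.1 (p.2.2 / 2) ∩ cball x₀ (2 ^ n)) ∧
        Good (n + 1) q := by
    rintro n ⟨C, K, ε⟩ ⟨hCc, hCs, hCm, hK, hε, hCsub⟩
    set D := closure (NN x₀ K (ε / 2) ∩ cball x₀ ((2:ℝ) ^ n)) with hD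
    have hDsub : D ⊆ NN x₀ K ε ∩ cball x₀ (2 ^ n) :=
      closure_NN_cball_subset (by positivity) hε
    have hDc : IsCompact D :=
      (isCompact_tau0_cball (r := 2 ^ n) (by positivity)).of_isClosed_subset
        isClosed_closure (hDsub.trans Set.inter_subset_right)
    have hC'c : IsCompact (C + D) := isCompact_tau0_add hCc hDc
    have hC's : C + D ⊆ s := by
      intro g hg
      rcases Set.mem_add.1 hg with ⟨c, hc, d, hd, rfl⟩
      exact hCsub (Set.add_mem_add hc (hDsub hd))
    have hC'm : C + D ⊆ cball x₀ (2 ^ (n + 1)) := by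
      intro g hg
      rcases Set.mem_add.1 hg with ⟨c, hc, d, hd, rfl⟩
      have h1 : ‖c‖ ≤ 2 ^ n := hCm hc
      have h2 : ‖d‖ ≤ 2 ^ n := (hDsub hd).2
      show ‖c + d‖ ≤ (2:ℝ) ^ (n + 1)
      calc ‖c + d‖ ≤ ‖c‖ + ‖d‖ := norm_add_le _ _
        _ ≤ 2 ^ n + 2 ^ n := add_le_add h1 h2
        _ = 2 ^ (n + 1) := by ring
    obtain ⟨K', ε', hK', hε', hsub'⟩ :=
      step_lemma hs hC'c hC's (m := 2 ^ (n + 1)) (r := 2 ^ (n + 1))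
        (by positivity) (by positivity) hC'm
    exact ⟨(C + D, K', ε'), rfl, hC'c, hC's, hC'm, hK', hε', hsub'⟩
  have hbase : ∃ p : Set (lip0 X x₀ ℝ) × Set X × ℝ, p.1 = {0} ∧ Good 0 p := by
    have h1 : IsCompact ({0} : Set (lip0 X x₀ ℝ)) := isCompact_singleton
    have h2 : ({0} : Set (lip0 X x₀ ℝ)) ⊆ s := by simpa using h0
    have h3 : ({0} : Set (lip0 X x₀ ℝ)) ⊆ cball x₀ (2 ^ 0) := by
      intro g hg
      rw [Set.mem_singleton_iff] at hg
      subst hg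
      show ‖(0 : lip0 X x₀ ℝ)‖ ≤ _
      simp
    obtain ⟨K0, ε0, hK0, hε0, hsub0⟩ :=
      step_lemma hs h1 h2 (m := 2 ^ 0) (r := 2 ^ 0) (by norm_num) (by norm_num) h3
    exact ⟨({0}, K0, ε0), rfl, h1, h2, h3, hK0, hε0, hsub0⟩
  choose q hq1 hq2 using hnext
  obtain ⟨p0, hp01, hp02⟩ := hbase
  let seq : (n : ℕ) → {p : Set (lip0 X x₀ ℝ) × Set X × ℝ // Good n p} :=
    fun n => Nat.rec ⟨p0, hp02⟩ (fun n ih => ⟨q n ih.1 ih.2, hq2 n ih.1 ih.2⟩) n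
  have hseq_succ : ∀ n, (seq (n + 1)).1.1 =
      (seq n).1.1 + closure
        (NN x₀ (seq n).1.2.1 ((seq n).1.2.2 / 2) ∩ cball x₀ (2 ^ n)) :=
    fun n => hq1 n (seq n).1 (seq n).2
  refine ⟨fun n => NN x₀ (seq n).1.2.1 ((seq n).1.2.2 / 2), fun n =>
    ⟨NN_mem_nhds (seq n).2.2.2.2.1 (half_pos (seq n).2.2.2.2.2.1), NN_convex, NN_balanced⟩, ?_⟩
  have hsum : ∀ n, (∑ i ∈ Finset.range n,
      (NN x₀ (seq i).1.2.1 ((seq i).1.2.2 / 2) ∩ cball x₀ (2 ^ i))) ⊆ (seq n).1.1 := by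
    intro n
    induction n with
    | zero =>
        rw [Finset.range_zero, Finset.sum_empty]
        intro g hg
        rw [Set.mem_zero] at hg
        subst hg
        show (0 : lip0 X x₀ ℝ) ∈ (seq 0).1.1
        rw [show (seq 0).1 = p0 from rfl, hp01]
        exact Set.mem_singleton _
    | succ n ih =>
        rw [Finset.sum_range_succ, hseq_succ n]
        intro g hg
        rcases Set.mem_add.1 hg with ⟨a, ha, b, hb, rfl⟩
        exact Set.add_mem_add (ih ha) (subset_closure hb)
  intro g hg
  obtain ⟨n, hn⟩ := Set.mem_iUnion.1 hg
  exact (seq (n + 1)).2.2.1 (hsum (n + 1) hn)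

lemma induced_eq_iff_relNhds {t1 t2 : TopologicalSpace (lip0 X x₀ ℝ)} {B : Set (lip0 X x₀ ℝ)} :
    TopologicalSpace.induced ((↑) : B → lip0 X x₀ ℝ) t1 =
      TopologicalSpace.induced ((↑) : B → lip0 X x₀ ℝ) t2 ↔
    ∀ f ∈ B, @nhds _ t1 f ⊓ 𝓟 B = @nhds _ t2 f ⊓ 𝓟 B := by
  constructor
  · intro h f hf
    have h1 : Filter.comap ((↑) : B → lip0 X x₀ ℝ) (@nhds _ t1 f) =
        Filter.comap ((↑) : B → lip0 X x₀ ℝ) (@nhds _ t2 f) := by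
      have e1 := @nhds_induced _ _ t1 ((↑) : B → lip0 X x₀ ℝ) ⟨f, hf⟩
      have e2 := @nhds_induced _ _ t2 ((↑) : B → lip0 X x₀ ℝ) ⟨f, hf⟩
      rw [← e1, ← e2, h]
    have h2 := congrArg (Filter.map ((↑) : B → lip0 X x₀ ℝ)) h1
    rwa [Filter.map_comap, Filter.map_comap, Subtype.range_coe] at h2
  · intro h
    refine TopologicalSpace.ext_nhds fun b => ?_
    rw [@nhds_induced _ _ t1, @nhds_induced _ _ t2]
    have key : ∀ t : TopologicalSpace (lip0 X x₀ ℝ),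
        Filter.comap ((↑) : B → lip0 X x₀ ℝ) (@nhds _ t ↑b) =
        Filter.comap ((↑) : B → lip0 X x₀ ℝ) (@nhds _ t ↑b ⊓ 𝓟 B) := by
      intro t
      rw [Filter.comap_inf, Filter.comap_principal]
      have hpre : ((↑) : B → lip0 X x₀ ℝ) ⁻¹' B = Set.univ := by
        ext x
        simp [x.2]
      rw [hpre, Filter.principal_univ, inf_top_eq]
    rw [key t1, key t2, h b b.2]

end Stmt9Aux

/-- On `Lip₀(X)`, the bounded weak* topology `τ_bw*` — the largest
(finest) topology agreeing with the weak* topology `σ(Lip₀(X), F(X))` on norm-bounded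
sets — coincides with the topology `τ_γ`. -/
theorem stmt9 (X : Type*) [MetricSpace X] (x₀ : X) :
    IsLeast
      {t : TopologicalSpace (lip0 X x₀ ℝ) |
        ∀ B : Set (lip0 X x₀ ℝ), NormBounded X x₀ ℝ B →
          TopologicalSpace.induced ((↑) : B → lip0 X x₀ ℝ) t =
            TopologicalSpace.induced ((↑) : B → lip0 X x₀ ℝ) (tauWeakStar X x₀)}
      (tauGamma X x₀ ℝ) := by
  constructor
  · -- `tauGamma` agrees with the weak* topology on norm-bounded sets
    intro B hB
    obtain ⟨C, hC⟩ := hB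
    refine (induced_eq_iff_relNhds).2 fun f hf => ?_
    calc @nhds _ (tauGamma X x₀ ℝ) f ⊓ 𝓟 B
        = @nhds _ (tau0 X x₀ ℝ) f ⊓ 𝓟 B := relNhds_tauGamma_eq_tau0 hC hf
      _ = @nhds _ (tPt X x₀) f ⊓ 𝓟 B := relNhds_tau0_eq_pt hC hf
      _ = @nhds _ (tauWeakStar X x₀) f ⊓ 𝓟 B := (relNhds_tauW_eq_pt hC hf).symm
  · -- `tauGamma` is finer than any topology agreeing with weak* on bounded sets
    intro t ht
    rw [TopologicalSpace.le_def]
    intro u hu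
    rw [isOpen_tauGamma_iff]
    intro f hf
    set s' : Set (lip0 X x₀ ℝ) := (f + ·) ⁻¹' u with hs'def
    have h0s' : (0 : lip0 X x₀ ℝ) ∈ s' := by
      show f + 0 ∈ u
      simpa using hf
    have hs'prop : ∀ g ∈ s', ∀ B : Set (lip0 X x₀ ℝ), NormBounded X x₀ ℝ B →
        ∃ K ε, IsCompact K ∧ 0 < ε ∧ ((g + ·) '' NN x₀ K ε) ∩ B ⊆ s' := by
      intro g hg B hBb
      obtain ⟨C, hC⟩ := hBb
      set M : ℝ := ‖f‖ + ‖g‖ + max C 0 with hMdef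
      set B' : Set (lip0 X x₀ ℝ) := ((f + ·) '' B) ∪ {f + g} with hB'def
      have hM : ∀ h' ∈ B', ‖h'‖ ≤ M := by
        rintro h' (⟨b, hb, rfl⟩ | h')
        · calc ‖f + b‖ ≤ ‖f‖ + ‖b‖ := norm_add_le _ _
            _ ≤ M := by
                have h1 := hC b hb
                have h2 := norm_nonneg g
                have h3 := le_max_left C (0:ℝ)
                rw [hMdef]; linarith
        · rw [Set.mem_singleton_iff] at h'
          subst h'
          calc ‖f + g‖ ≤ ‖f‖ + ‖g‖ := norm_add_le _ _
            _ ≤ M := by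
                have h3 := le_max_right C (0:ℝ)
                rw [hMdef]; linarith
      have hmemB' : f + g ∈ B' := Or.inr rfl
      have hrel : @nhds _ t (f + g) ⊓ 𝓟 B' =
          @nhds _ (tauWeakStar X x₀) (f + g) ⊓ 𝓟 B' :=
        (induced_eq_iff_relNhds).1 (ht B' ⟨M, hM⟩) (f + g) hmemB'
      have hrel2 : @nhds _ t (f + g) ⊓ 𝓟 B' =
          @nhds _ (tau0 X x₀ ℝ) (f + g) ⊓ 𝓟 B' := by
        rw [hrel, relNhds_tauW_eq_pt hM hmemB', ← relNhds_tau0_eq_pt hM hmemB']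
      have humem : u ∈ @nhds _ t (f + g) ⊓ 𝓟 B' :=
        Filter.mem_inf_of_left (@IsOpen.mem_nhds _ t (f + g) u hu hg)
      rw [hrel2, Filter.mem_inf_iff_superset] at humem
      obtain ⟨M1, hM1, M2, hM2, hsubu⟩ := humem
      obtain ⟨⟨K, ε⟩, ⟨hK, hε⟩, hsubM1⟩ := (tau0_hasBasis (f + g)).mem_iff.1 hM1
      refine ⟨K, ε, hK, hε, ?_⟩
      rintro h' ⟨⟨v, hv, rfl⟩, hh'B⟩
      have hmemM1 : f + (g + v) ∈ M1 := by
        refine hsubM1 ?_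
        intro x hx
        have h1 : toFun' (f + (g + v)) x - toFun' (f + g) x = toFun' v x := by
          rw [toFun'_add, toFun'_add, toFun'_add]
          simp
        rw [h1]
        exact hv x hx
      have hmemB'2 : f + (g + v) ∈ B' := Or.inl ⟨g + v, hh'B, rfl⟩
      exact hsubu ⟨hmemM1, Filter.mem_principal.1 hM2 hmemB'2⟩
    obtain ⟨U, hU, hUsub⟩ := gamma_construction hs'prop h0s'
    refine mem_nGamma_of_valid f hU ?_
    rintro _ ⟨h, hh, rfl⟩
    exact hUsub hh

end LipApprox
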